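/- (Interior derivative bound from Hölder control) Assume D ⊂ ℝ × ℝ^d satisfies a spatial interior cone condition with parameters r₀ > 0 and β ∈ (0,1): for all r ∈ [0, r₀], all x ∈ D, and any vector θ ∈ ℝ^d, there exists y ∈ D with d(x,y) = r and |θ·(y-x)_spatial| ≥ β d(x,y) |θ|. Let κ > 1 and U be a two-variable function on D × D with finite seminorm [U]_{κ,D} := sup_{z∈D} inf_{ν(z)∈ℝ^d} sup_{z̄∈D} |U(z̄,z) - ν(z)·(x - x̄)| / d(z,z̄)^κ. Then for the optimal ν and all r ∈ [0, r₀], β ‖ν‖_D ≤ r^{κ-1}[U]_{κ,D} + r^{-1}‖U‖_{D,r}, where ‖U‖_{D,r} = sup{|U(z̄,z)| : z,z̄ ∈ D, d(z,z̄) ≤ r}. -/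

import Mathlib

/-- The parabolic metric `d((t,x),(s,y)) = max{√|t-s|, |x-y|_∞}` on `ℝ × ℝ^d`
(the norm on `Fin d → ℝ` is the supremum norm). -/
noncomputable def pdist {d : ℕ} (z w : ℝ × (Fin d → ℝ)) : ℝ :=
  max (Real.sqrt |z.1 - w.1|) ‖z.2 - w.2‖

/-- Euclidean norm of a spatial vector. -/
noncomputable def enorm {d : ℕ} (v : Fin d → ℝ) : ℝ :=
  Real.sqrt (∑ i, v i ^ 2)

/-- Euclidean inner product of spatial vectors. -/
def dotp {d : ℕ} (v w : Fin d → ℝ) : ℝ := ∑ i, v i * w i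

/-- interior derivative bound from Hölder control: if `D`
satisfies a spatial interior cone condition with parameters `r₀ > 0`, `β ∈ (0,1)`,
`κ > 1`, and `U` is a two-variable function on `D × D` admitting, at every
base point `z ∈ D`, a "generalised gradient" `ν(z)` with
`|U(z̄,z) - ν(z)·(x - x̄)| ≤ K_U d(z,z̄)^κ`, then for every `r ∈ (0, r₀]` and
every `z ∈ D`, `β ‖ν(z)‖ ≤ r^{κ-1} K_U + r⁻¹ ‖U‖_{D,r}`. -/
theorem interior_derivative_bound (d : ℕ) (D : Set (ℝ × (Fin d → ℝ)))
    (r₀ β : ℝ) (hr₀ : 0 < r₀) (hβ0 : 0 < β) (hβ1 : β < 1)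
    (hcone : ∀ r ∈ Set.Icc (0 : ℝ) r₀, ∀ z ∈ D, ∀ θ : Fin d → ℝ,
      ∃ y ∈ D, pdist z y = r ∧
        β * pdist z y * _root_.enorm θ ≤ |dotp θ (y.2 - z.2)|)
    (κ : ℝ) (hκ : 1 < κ)
    (U : (ℝ × (Fin d → ℝ)) → (ℝ × (Fin d → ℝ)) → ℝ)
    (ν : (ℝ × (Fin d → ℝ)) → Fin d → ℝ)
    (KU NU r : ℝ)
    (hν : ∀ z ∈ D, ∀ z' ∈ D,
      |U z' z - dotp (ν z) (z.2 - z'.2)| ≤ KU * pdist z z' ^ κ)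
    (hNU : ∀ z ∈ D, ∀ z' ∈ D, pdist z z' ≤ r → |U z' z| ≤ NU)
    (hr : 0 < r) (hrr₀ : r ≤ r₀) :
    ∀ z ∈ D, β * _root_.enorm (ν z) ≤ r ^ (κ - 1) * KU + r⁻¹ * NU := by
  intro z hz
  obtain ⟨y, hyD, hdy, hlow⟩ := hcone r ⟨hr.le, hrr₀⟩ z hz (ν z)
  have hU := hν z hz y hyD
  have hN := hNU z hz y hyD (by rw [hdy])
  rw [hdy] at hU hlow
  have hneg : dotp (ν z) (y.2 - z.2) = -(dotp (ν z) (z.2 - y.2)) := by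
    simp [dotp, mul_sub, Finset.sum_sub_distrib]
  have h1 : |dotp (ν z) (y.2 - z.2)| ≤ KU * r ^ κ + NU := by
    rw [hneg]
    calc |-(dotp (ν z) (z.2 - y.2))|
        = |(U y z - dotp (ν z) (z.2 - y.2)) - U y z| := by ring_nf
      _ ≤ |U y z - dotp (ν z) (z.2 - y.2)| + |U y z| := abs_sub _ _
      _ ≤ KU * r ^ κ + NU := add_le_add hU hN
  have h2 : β * r * _root_.enorm (ν z) ≤ KU * r ^ κ + NU := hlow.trans h1
  have h3 : β * _root_.enorm (ν z) ≤ (KU * r ^ κ + NU) / r := by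
    rw [le_div_iff₀ hr]; nlinarith
  have hr1 : r ^ κ / r = r ^ (κ - 1) := by
    rw [Real.rpow_sub hr, Real.rpow_one]
  calc β * _root_.enorm (ν z) ≤ (KU * r ^ κ + NU) / r := h3
    _ = r ^ κ / r * KU + r⁻¹ * NU := by ring
    _ = r ^ (κ - 1) * KU + r⁻¹ * NU := by rw [hr1]
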